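/- The circular drawing of K_n on the regular n-gon has total resolution at least π/n, i.e., every angle between two edges sharing an endpoint is at least π/n and every angle at a crossing of two disjoint edges is at least 2π/n. -/

import Mathlib

open Real EuclideanGeometry

section CGTRhelpers

open InnerProductGeometry RealInnerProductSpace

variable {E : Type*} [NormedAddCommGroup E] [InnerProductSpace ℝ E]

/-- If the inner product is at most `cos r` times the product of norms, with
`0 ≤ r ≤ π/2`, then the (unoriented) angle between the vectors is at least `r`. -/
lemma CGTR.key (r : ℝ) (h0 : 0 ≤ r) (h2 : r ≤ π/2) (v w : E)
    (h : ⟪v, w⟫ ≤ Real.cos r * (‖v‖ * ‖w‖)) :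
    r ≤ InnerProductGeometry.angle v w := by
  rw [InnerProductGeometry.angle]
  by_contra hlt
  push_neg at hlt
  have hratio : |⟪v, w⟫ / (‖v‖ * ‖w‖)| ≤ 1 := abs_real_inner_div_norm_mul_norm_le_one v w
  have h1 : -1 ≤ ⟪v, w⟫ / (‖v‖ * ‖w‖) := by cases abs_le.mp hratio; assumption
  have h1' : ⟪v, w⟫ / (‖v‖ * ‖w‖) ≤ 1 := by cases abs_le.mp hratio; assumption
  have hc : Real.cos r < Real.cos (Real.arccos (⟪v, w⟫ / (‖v‖ * ‖w‖))) :=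
    Real.cos_lt_cos_of_nonneg_of_le_pi (Real.arccos_nonneg _)
      (by linarith [Real.pi_pos]) hlt
  rw [Real.cos_arccos h1 h1'] at hc
  rcases eq_or_lt_of_le (mul_nonneg (norm_nonneg v) (norm_nonneg w)) with he | hpos
  · rw [← he, div_zero] at hc
    have := Real.cos_nonneg_of_mem_Icc (show r ∈ Set.Icc (-(π/2)) (π/2) from ⟨by linarith, h2⟩)
    linarith
  · rw [lt_div_iff₀ hpos] at hc
    linarith

lemma CGTR.trig_id (A B C D : ℝ) :
    (Real.cos B - Real.cos A) * (Real.cos D - Real.cos C) +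
    (Real.sin B - Real.sin A) * (Real.sin D - Real.sin C) =
    4 * Real.sin ((B - A)/2) * Real.sin ((D - C)/2) * Real.cos ((A + B - C - D)/2) := by
  rw [Real.cos_sub_cos, Real.cos_sub_cos, Real.sin_sub_sin, Real.sin_sub_sin,
    show (A + B - C - D)/2 = (B + A)/2 - (D + C)/2 by ring, Real.cos_sub]
  ring

lemma CGTR.band (x r : ℝ) (h0 : 0 ≤ r) (h1 : r ≤ x) (h2 : x ≤ π - r) :
    |Real.cos x| ≤ Real.cos r := by
  rw [abs_le]
  constructor
  · have h3 : Real.cos (π - r) ≤ Real.cos x :=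
      Real.cos_le_cos_of_nonneg_of_le_pi (le_trans h0 h1) (by linarith) h2
    rw [Real.cos_pi_sub] at h3
    linarith
  · exact Real.cos_le_cos_of_nonneg_of_le_pi h0 (by linarith) h1

end CGTRhelpers

set_option maxHeartbeats 1000000 in
open InnerProductGeometry RealInnerProductSpace in
/-- The circular drawing of `K_n` on the regular `n`-gon (vertex `k` at
`(cos (2πk/n), sin (2πk/n))`) has total resolution at least `π/n`: every angle between two
edges sharing an endpoint is at least `π/n`, and every angle at a crossing of two disjoint
edges is at least `2π/n`. -/
theorem complete_graph_total_resolution (n : ℕ) (hn : 3 ≤ n)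
    (p : ℕ → EuclideanSpace ℝ (Fin 2))
    (hp : ∀ k : ℕ, p k = (EuclideanSpace.equiv (Fin 2) ℝ).symm
      ![Real.cos (2 * π * k / n), Real.sin (2 * π * k / n)]) :
    (∀ i j k : ℕ, i < n → j < n → k < n → j ≠ i → k ≠ i → j ≠ k →
      π / n ≤ ∠ (p j) (p i) (p k)) ∧
    (∀ i j i' j' : ℕ, i < j → j < i' → i' < j' → j' < n →
      ∀ c : EuclideanSpace ℝ (Fin 2),
        c ∈ segment ℝ (p i) (p i') → c ∈ segment ℝ (p j) (p j') →
        2 * π / n ≤ ∠ (p j') c (p i') ∧ 2 * π / n ≤ ∠ (p j) c (p i')) := by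
  have hn0 : (0:ℝ) < n := by
    have : (3:ℝ) ≤ n := by exact_mod_cast hn
    linarith
  -- inner product of two chords
  have hin : ∀ a b c d : ℕ, ⟪p b - p a, p d - p c⟫ =
      4 * Real.sin (π*((b:ℝ)-a)/n) * Real.sin (π*((d:ℝ)-c)/n) *
        Real.cos (π*((a:ℝ)+b-c-d)/n) := by
    intro a b c d
    have h1 : ⟪p b - p a, p d - p c⟫ =
        (Real.cos (2*π*b/n) - Real.cos (2*π*a/n)) * (Real.cos (2*π*d/n) - Real.cos (2*π*c/n)) +
        (Real.sin (2*π*b/n) - Real.sin (2*π*a/n)) * (Real.sin (2*π*d/n) - Real.sin (2*π*c/n)) := by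
      simp [hp, PiLp.inner_apply, Fin.sum_univ_two, RCLike.inner_apply]
      ring
    rw [h1, CGTR.trig_id,
      show (2*π*(b:ℝ)/n - 2*π*(a:ℝ)/n)/2 = π*((b:ℝ)-a)/n by ring,
      show (2*π*(d:ℝ)/n - 2*π*(c:ℝ)/n)/2 = π*((d:ℝ)-c)/n by ring,
      show (2*π*(a:ℝ)/n + 2*π*(b:ℝ)/n - 2*π*(c:ℝ)/n - 2*π*(d:ℝ)/n)/2
        = π*((a:ℝ)+b-c-d)/n by ring]
  -- norm of a chord
  have hnorm : ∀ a b : ℕ, ‖p b - p a‖ = 2 * |Real.sin (π*((b:ℝ)-a)/n)| := by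
    intro a b
    have h2 := hin a b a b
    rw [real_inner_self_eq_norm_sq,
      show π*((a:ℝ)+b-a-b)/n = 0 by ring, Real.cos_zero] at h2
    have h3 : ‖p b - p a‖^2 = (2 * |Real.sin (π*((b:ℝ)-a)/n)|)^2 := by
      rw [h2, mul_pow, sq_abs]; ring
    calc ‖p b - p a‖ = √(‖p b - p a‖^2) := (Real.sqrt_sq (norm_nonneg _)).symm
      _ = √((2 * |Real.sin (π*((b:ℝ)-a)/n)|)^2) := by rw [h3]
      _ = 2 * |Real.sin (π*((b:ℝ)-a)/n)| := Real.sqrt_sq (by positivity)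
  -- master bound on the chord inner product
  have hbound : ∀ a b c d : ℕ, ∀ r : ℝ, 0 ≤ Real.cos r →
      |Real.cos (π*((a:ℝ)+b-c-d)/n)| ≤ Real.cos r →
      |⟪p b - p a, p d - p c⟫| ≤ Real.cos r * (‖p b - p a‖ * ‖p d - p c‖) := by
    intro a b c d r hr hcos
    rw [hin, hnorm, hnorm, abs_mul, abs_mul, abs_mul]
    have e4 : |(4:ℝ)| = 4 := by norm_num
    rw [e4]
    set s1 := |Real.sin (π*((b:ℝ)-a)/n)| with hs1
    set s2 := |Real.sin (π*((d:ℝ)-c)/n)| with hs2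
    have hs1' : 0 ≤ s1 := abs_nonneg _
    have hs2' : 0 ≤ s2 := abs_nonneg _
    nlinarith [mul_nonneg hs1' hs2', hcos,
      mul_le_mul_of_nonneg_left hcos (mul_nonneg hs1' hs2')]
  -- arithmetic bound on cosines
  have hnat : ∀ m r : ℕ, r ≤ m → m + r ≤ n → |Real.cos (π*(m:ℝ)/n)| ≤ Real.cos (π*(r:ℝ)/n) := by
    intro m r h1 h2
    apply CGTR.band
    · positivity
    · have hrm : (r:ℝ) ≤ m := by exact_mod_cast h1
      gcongr
    · rw [le_sub_iff_add_le, ← add_div, div_le_iff₀ hn0]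
      have : (m:ℝ) + r ≤ n := by exact_mod_cast h2
      nlinarith [Real.pi_pos]
  constructor
  · -- angular resolution
    intro i j k hi hj hk hji hki hjk
    rw [EuclideanGeometry.angle, vsub_eq_sub, vsub_eq_sub]
    have hr0 : (0:ℝ) ≤ π/n := by positivity
    have h3n : (3:ℝ) ≤ n := by exact_mod_cast hn
    have hr2 : π/n ≤ π/2 := by
      rw [div_le_div_iff₀ hn0 two_pos]
      nlinarith [Real.pi_pos]
    have hcosnn : 0 ≤ Real.cos (π*(1:ℕ)/n) := by
      apply Real.cos_nonneg_of_mem_Icc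
      have h1 : (0:ℝ) ≤ π*((1:ℕ):ℝ)/n := by positivity
      have h2 : π*((1:ℕ):ℝ)/n = π/n := by push_cast; ring
      constructor
      · linarith [Real.pi_pos]
      · rw [h2]; linarith [hr2]
    have hargbound : |Real.cos (π*((i:ℝ)+j-i-k)/n)| ≤ Real.cos (π*((1:ℕ):ℝ)/n) := by
      rcases lt_or_gt_of_ne hjk with hlt | hgt
      · have harg : π*((i:ℝ)+j-i-k)/n = -(π*(((k-j:ℕ)):ℝ)/n) := by
          push_cast [Nat.cast_sub hlt.le]; ring
        rw [harg, Real.cos_neg]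
        exact hnat (k-j) 1 (by omega) (by omega)
      · have harg : π*((i:ℝ)+j-i-k)/n = π*(((j-k:ℕ)):ℝ)/n := by
          push_cast [Nat.cast_sub hgt.le]; ring
        rw [harg]
        exact hnat (j-k) 1 (by omega) (by omega)
    have hb := hbound i j i k (π*((1:ℕ):ℝ)/n) hcosnn hargbound
    have hr : π/n = π*((1:ℕ):ℝ)/n := by push_cast; ring
    rw [hr]
    apply CGTR.key _ (by rw [← hr]; exact hr0) (by rw [← hr]; exact hr2)
    exact le_trans (le_abs_self _) hb
  · -- crossing resolution
    intro i j i' j' hij hji' hi'j' hj'n c hci hcj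
    have hn4 : 4 ≤ n := by omega
    obtain ⟨a, b, ha, hb, hab, hc1⟩ := hci
    obtain ⟨a2, b2, ha2, hb2, hab2, hc2⟩ := hcj
    have e1 : p i' - c = a • (p i' - p i) := by
      rw [← hc1, show b = 1 - a by linarith]; module
    have e2 : p j' - c = a2 • (p j' - p j) := by
      rw [← hc2, show b2 = 1 - a2 by linarith]; module
    have e3 : p j - c = (-b2) • (p j' - p j) := by
      rw [← hc2, show a2 = 1 - b2 by linarith]; module
    have hr0 : (0:ℝ) ≤ 2*π/n := by positivity
    have h4n : (4:ℝ) ≤ n := by exact_mod_cast hn4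
    have hr2 : 2*π/n ≤ π/2 := by
      rw [div_le_div_iff₀ hn0 two_pos]
      nlinarith [Real.pi_pos]
    have hcosnn : 0 ≤ Real.cos (π*((2:ℕ):ℝ)/n) := by
      apply Real.cos_nonneg_of_mem_Icc
      have h1 : (0:ℝ) ≤ π*((2:ℕ):ℝ)/n := by positivity
      have h2 : π*((2:ℕ):ℝ)/n = 2*π/n := by push_cast; ring
      constructor
      · linarith [Real.pi_pos]
      · rw [h2]; linarith [hr2]
    have hargbound : |Real.cos (π*((j:ℝ)+j'-i-i')/n)| ≤ Real.cos (π*((2:ℕ):ℝ)/n) := by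
      have hcast : (((j+j'-i-i':ℕ)):ℝ) = (j:ℝ)+j'-i-i' := by
        rw [Nat.cast_sub (by omega), Nat.cast_sub (by omega)]
        push_cast; ring
      have harg : π*((j:ℝ)+j'-i-i')/n = π*(((j+j'-i-i':ℕ)):ℝ)/n := by rw [hcast]
      rw [harg]
      exact hnat (j+j'-i-i') 2 (by omega) (by omega)
    have hb := hbound j j' i i' (π*((2:ℕ):ℝ)/n) hcosnn hargbound
    have hr : 2*π/n = π*((2:ℕ):ℝ)/n := by push_cast; ring
    set I := ⟪p j' - p j, p i' - p i⟫ with hI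
    have hIle : I ≤ Real.cos (π*((2:ℕ):ℝ)/n) * (‖p j' - p j‖ * ‖p i' - p i‖) :=
      le_trans (le_abs_self _) hb
    have hIge : -I ≤ Real.cos (π*((2:ℕ):ℝ)/n) * (‖p j' - p j‖ * ‖p i' - p i‖) :=
      le_trans (neg_le_abs _) hb
    have hnw : 0 ≤ ‖p j' - p j‖ * ‖p i' - p i‖ := mul_nonneg (norm_nonneg _) (norm_nonneg _)
    constructor
    · rw [EuclideanGeometry.angle, vsub_eq_sub, vsub_eq_sub, hr]
      apply CGTR.key _ (by rw [← hr]; exact hr0) (by rw [← hr]; exact hr2)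
      rw [e1, e2, real_inner_smul_left, real_inner_smul_right,
        norm_smul, norm_smul, Real.norm_eq_abs, Real.norm_eq_abs,
        abs_of_nonneg ha, abs_of_nonneg ha2]
      nlinarith [mul_nonneg ha2 ha, hIle, hnw,
        mul_le_mul_of_nonneg_left hIle (mul_nonneg ha2 ha)]
    · rw [EuclideanGeometry.angle, vsub_eq_sub, vsub_eq_sub, hr]
      apply CGTR.key _ (by rw [← hr]; exact hr0) (by rw [← hr]; exact hr2)
      rw [e1, e3, real_inner_smul_left, real_inner_smul_right,
        norm_smul, norm_smul, Real.norm_eq_abs, Real.norm_eq_abs,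
        abs_of_nonneg ha, abs_neg, abs_of_nonneg hb2]
      nlinarith [mul_nonneg hb2 ha, hIge, hnw,
        mul_le_mul_of_nonneg_left hIge (mul_nonneg hb2 ha)]
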